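/- Let K be a real closed field with convex valuation ring V and residue map λ: V → k. A subfield k₀ ⊆ V maps isomorphically onto k under λ if and only if k₀ is a maximal subfield of V. In particular every real closed valued field has a coefficient field. -/

import Mathlib

/-- A real closed (totally ordered) field: every nonnegative element is a square and
every polynomial of odd degree has a root. -/
def IsRealClosedOrdField (K : Type*) [Field K] [LinearOrder K] [IsStrictOrderedRing K] : Prop :=
  (∀ x : K, 0 ≤ x → ∃ y : K, y ^ 2 = x) ∧
  ∀ p : Polynomial K, Odd p.natDegree → ∃ x : K, p.IsRoot x


open Polynomial IntermediateField Module


private lemma sqFi {F N : Type*} [Field F] [Field N] [Algebra F N] [CharZero F]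
    (sq : ∀ a : F, (∃ b, b ^ 2 = a) ∨ (∃ b, b ^ 2 = -a))
    (sumsq : ∀ a b : F, ∃ d : F, d ^ 2 = a ^ 2 + b ^ 2)
    (neg1 : ∀ b : F, b ^ 2 ≠ -1)
    (i : N) (hi : i ^ 2 = -1) (α β : F) :
    ∃ x y : F, (algebraMap F N x + algebraMap F N y * i) ^ 2
      = algebraMap F N α + algebraMap F N β * i := by
  by_cases hβ : β = 0
  · subst hβ
    rcases sq α with ⟨b, hb⟩ | ⟨b, hb⟩
    · refine ⟨b, 0, ?_⟩
      simp only [map_zero, zero_mul, add_zero, ← map_pow, hb]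
    · refine ⟨0, b, ?_⟩
      simp only [map_zero, zero_add, mul_pow, ← map_pow, hb, hi, map_neg, zero_mul, add_zero]
      ring
  · obtain ⟨r, hr⟩ := sumsq α β
    have h2 : (2 : F) ≠ 0 := two_ne_zero
    have hprod : (α + r) * (α - r) = -β ^ 2 := by linear_combination -hr
    have hne1 : α + r ≠ 0 := by
      intro h
      apply hβ
      have : β ^ 2 * 2 = 0 := by linear_combination 2*hprod - 2*(α - r) * h
      have h0 : β ^ 2 = 0 := by linear_combination this / 2
      exact pow_eq_zero_iff (n := 2) (by norm_num) |>.mp h0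
    have hne2 : α - r ≠ 0 := by
      intro h
      apply hβ
      have : β ^ 2 * 2 = 0 := by linear_combination 2*hprod - 2*(α + r) * h
      have h0 : β ^ 2 = 0 := by linear_combination this / 2
      exact pow_eq_zero_iff (n := 2) (by norm_num) |>.mp h0
    have key : ∃ ρ x : F, ρ ^ 2 = α ^ 2 + β ^ 2 ∧ x ^ 2 = (α + ρ) / 2 ∧ α + ρ ≠ 0 := by
      rcases sq ((α + r) / 2) with ⟨x, hx⟩ | ⟨u, hu⟩
      · exact ⟨r, x, hr, hx, hne1⟩
      · rcases sq ((α - r) / 2) with ⟨x, hx⟩ | ⟨v, hv⟩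
        · refine ⟨-r, x, by rw [neg_pow]; simpa using hr, by
            rwa [show α + -r = α - r by ring], by rwa [show α + -r = α - r by ring]⟩
        · exfalso
          have hβ2 : β / 2 ≠ 0 := div_ne_zero hβ h2
          apply neg1 ((u * v) / (β / 2))
          have huv : (u * v) ^ 2 = -(β / 2) ^ 2 := by
            rw [mul_pow, hu, hv]
            field_simp
            linear_combination -hr
          rw [div_pow, huv]
          field_simp
    obtain ⟨ρ, x, hρ, hx, hαρ⟩ := key
    have hx0 : x ≠ 0 := by
      intro h
      rw [h] at hx
      apply hαρ
      simpa using hx.symm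
    refine ⟨x, β / (2 * x), ?_⟩
    set y := β / (2 * x) with hy
    have e2 : 2 * (x * y) = β := by
      rw [hy]; field_simp
    have e1 : x ^ 2 - y ^ 2 = α := by
      rw [hy]
      field_simp
      linear_combination (4*x^2 + 2*ρ - 2*α) * hx + hρ
    have expand : (algebraMap F N x + algebraMap F N y * i) ^ 2
        = algebraMap F N (x ^ 2 - y ^ 2) + algebraMap F N (2 * (x * y)) * i := by
      rw [map_sub, map_pow, map_pow, map_mul, map_mul, map_ofNat]
      linear_combination (algebraMap F N y) ^ 2 * hi
    rw [expand, e1, e2]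

set_option maxHeartbeats 1000000 in
private theorem AS_bound {F : Type*} [Field F] [CharZero F]
    (sq : ∀ a : F, (∃ b, b ^ 2 = a) ∨ (∃ b, b ^ 2 = -a))
    (sumsq : ∀ a b : F, ∃ d : F, d ^ 2 = a ^ 2 + b ^ 2)
    (neg1 : ∀ b : F, b ^ 2 ≠ -1)
    (oddone : ∀ q : F[X], Irreducible q → Odd q.natDegree → q.natDegree = 1)
    (Q : F[X]) (hQ : Irreducible Q) : Q.natDegree ≤ 2 := by
  classical
  haveI : Fact (Nat.Prime 2) := ⟨Nat.prime_two⟩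
  set f : F[X] := (X ^ 2 + C 1) * Q with hf
  have hX2 : (X ^ 2 + C 1 : F[X]).Monic := monic_X_pow_add_C 1 (by norm_num)
  have hQ0 : Q ≠ 0 := hQ.ne_zero
  have hf0 : f ≠ 0 := mul_ne_zero hX2.ne_zero hQ0
  set N := f.SplittingField with hN
  haveI : IsGalois F N := ⟨⟩
  -- the imaginary unit
  have hsplX : Splits ((X ^ 2 + C 1 : F[X]).map (algebraMap F N)) :=
    (SplittingField.splits f).of_dvd (Polynomial.map_ne_zero hf0) (Polynomial.map_dvd _ (Dvd.intro Q rfl))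
  obtain ⟨i, hi'⟩ := hsplX.exists_eval_eq_zero
    (by rw [degree_map, degree_X_pow_add_C (by norm_num) 1]; norm_num)
  rw [eval_map] at hi'
  have hi : i ^ 2 = -1 := by
    have h := hi'
    simp only [eval₂_add, eval₂_pow, eval₂_X, eval₂_C, eval₂_one, map_one] at h
    linear_combination h
  have hiint : IsIntegral F i := ⟨X ^ 2 + C 1, hX2, by simpa using hi'⟩
  -- Galois group is a 2-group
  set G := N ≃ₐ[F] N with hG
  have P : Sylow 2 G := default
  haveI : P.toSubgroup.FiniteIndex := inferInstance
  have hfix : finrank (fixedField P.toSubgroup) N = Nat.card P.toSubgroup := by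
    exact finrank_fixedField_eq_card _
  have hGfr : finrank F N = Nat.card G := by
    rw [IsGalois.card_aut_eq_finrank]
  have hidx : P.toSubgroup.index * Nat.card P.toSubgroup = Nat.card G :=
    Subgroup.index_mul_card _
  have htower : finrank F (fixedField P.toSubgroup) * finrank (fixedField P.toSubgroup) N
      = finrank F N := finrank_mul_finrank _ _ _
  have hEidx : finrank F (fixedField P.toSubgroup) = P.toSubgroup.index := by
    have hpos : 0 < Nat.card P.toSubgroup := Nat.card_pos
    apply Nat.eq_of_mul_eq_mul_right hpos
    rw [← hfix] at hidx ⊢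
    rw [htower, hGfr, ← hidx, hfix]
  have hoddidx : ¬ 2 ∣ P.toSubgroup.index := P.not_dvd_index
  -- primitive element of the fixed field
  obtain ⟨α, hα⟩ := Field.exists_primitive_element F (fixedField P.toSubgroup)
  have hαint : IsIntegral F α := IsIntegral.of_finite F α
  have hEone : finrank F (fixedField P.toSubgroup) = 1 := by
    have h2 : finrank F (fixedField P.toSubgroup) = (minpoly F α).natDegree := by
      rw [← adjoin.finrank hαint, hα, finrank_top']
    have hoddmin : Odd (minpoly F α).natDegree := by
      rw [← h2, hEidx]; rwa [← Nat.not_even_iff_odd, even_iff_two_dvd]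
    rw [h2]; exact oddone _ (minpoly.irreducible hαint) hoddmin
  have hG2 : Nat.card G = 2 ^ (Nat.card G).factorization 2 := by
    have hcard : Nat.card P.toSubgroup = Nat.card G := by
      rw [← hidx, ← hEidx, hEone, one_mul]
    calc Nat.card G = Nat.card P.toSubgroup := hcard.symm
      _ = 2 ^ (Nat.card G).factorization 2 := P.card_eq_multiplicity
  -- every element of F⟮i⟯ is a square in F⟮i⟯
  have hkey : ∀ μ : N, μ ∈ F⟮i⟯ → ∃ ζ ∈ F⟮i⟯, ζ ^ 2 = μ := by
    intro μ hμ
    have hμ' : μ ∈ (F⟮i⟯).toSubalgebra := hμ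
    rw [adjoin_simple_toSubalgebra_of_isAlgebraic hiint.isAlgebraic,
      Algebra.adjoin_singleton_eq_range_aeval] at hμ'
    obtain ⟨p, hp0⟩ := hμ'
    have hp : aeval i p = μ := hp0
    have hXmod : aeval i (X ^ 2 + C 1 : F[X]) = 0 := by
      rw [map_add, map_pow, aeval_X, aeval_C, hi]; simp
    set q := p %ₘ (X ^ 2 + C 1) with hq
    have hqeval : aeval i q = μ := by
      rw [← hp]
      conv_rhs => rw [← modByMonic_add_div p (X ^ 2 + C 1)]
      rw [map_add, map_mul, hXmod, zero_mul, add_zero]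
    have hdeg : q.degree ≤ 1 := by
      have hlt := degree_modByMonic_lt p hX2
      rw [degree_X_pow_add_C (by norm_num) 1] at hlt
      exact Order.le_of_lt_succ (by exact_mod_cast hlt)
    have hqrep : q = C (q.coeff 1) * X + C (q.coeff 0) := eq_X_add_C_of_degree_le_one hdeg
    obtain ⟨x, y, hxy⟩ := sqFi sq sumsq neg1 i hi (q.coeff 0) (q.coeff 1)
    have hrep : aeval i q = algebraMap F N (q.coeff 0) + algebraMap F N (q.coeff 1) * i := by
      conv_lhs => rw [hqrep]
      rw [map_add, map_mul, aeval_X, aeval_C, aeval_C]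
      ring
    exact ⟨algebraMap F N x + algebraMap F N y * i,
      add_mem (IntermediateField.algebraMap_mem _ x) (mul_mem (IntermediateField.algebraMap_mem _ y) (mem_adjoin_simple_self F i)),
      hxy.trans (hrep.symm.trans hqeval)⟩
  -- N = F(i)
  have hMN : finrank F⟮i⟯ N = 1 := by
    by_contra hne
    have hdvd : finrank F⟮i⟯ N ∣ Nat.card G := by
      rw [← hGfr, ← finrank_mul_finrank F F⟮i⟯ N]
      exact dvd_mul_left _ _
    rw [hG2] at hdvd
    obtain ⟨m, hmle, hm⟩ := (Nat.dvd_prime_pow Nat.prime_two).mp hdvd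
    have hm0 : m ≠ 0 := by
      rintro rfl
      rw [pow_zero] at hm
      exact hne hm
    have hcardG1 : Nat.card (N ≃ₐ[F⟮i⟯] N) = 2 ^ m := by
      rw [IsGalois.card_aut_eq_finrank, hm]
    obtain ⟨H₂, hH₂⟩ := Sylow.exists_subgroup_card_pow_prime (G := N ≃ₐ[F⟮i⟯] N) 2
      (n := m - 1) (by rw [hcardG1]; exact pow_dvd_pow 2 (Nat.sub_le m 1))
    set E₂ := fixedField H₂ with hE₂def
    have hfr2 : finrank E₂ N = 2 ^ (m - 1) := by
      rw [Nat.card_eq_fintype_card] at hH₂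
      rw [hE₂def, finrank_fixedField_eq_card, Nat.card_eq_fintype_card, hH₂]
    have hE₂2 : finrank F⟮i⟯ E₂ = 2 := by
      have ht := finrank_mul_finrank F⟮i⟯ E₂ N
      rw [hfr2, hm] at ht
      have h2m : (2:ℕ) ^ m = 2 * 2 ^ (m - 1) := by
        rw [← pow_succ']
        congr 1
        omega
      rw [h2m] at ht
      have := Nat.eq_of_mul_eq_mul_right (show 0 < 2 ^ (m-1) by positivity) ht
      exact this
    obtain ⟨z₀, hz₀⟩ := Field.exists_primitive_element F⟮i⟯ E₂
    set z : N := (z₀ : N) with hzdef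
    have hz₀int : IsIntegral F⟮i⟯ z₀ := IsIntegral.of_finite _ z₀
    have hzint : IsIntegral F⟮i⟯ z := IsIntegral.of_finite _ z
    have hzeq : z = algebraMap E₂ N z₀ := rfl
    have hminz : (minpoly F⟮i⟯ z).natDegree = 2 := by
      rw [hzeq, minpoly.algebraMap_eq (algebraMap E₂ N).injective]
      rw [← adjoin.finrank hz₀int, hz₀, finrank_top']
      exact hE₂2
    have hzM : z ∉ F⟮i⟯ := by
      intro hzmem
      have hz₀bot : z₀ ∈ (⊥ : IntermediateField F⟮i⟯ E₂) := by
        rw [IntermediateField.mem_bot]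
        refine ⟨⟨z, hzmem⟩, ?_⟩
        apply Subtype.ext
        rfl
      have : (⊥ : IntermediateField F⟮i⟯ E₂) = ⊤ := by
        rw [← hz₀, adjoin_simple_eq_bot_iff.mpr hz₀bot]
      have h1' : finrank F⟮i⟯ E₂ = 1 := by
        rw [← IntermediateField.finrank_bot (F := F⟮i⟯) (E := E₂), this, finrank_top']
      rw [h1'] at hE₂2
      norm_num at hE₂2
    -- quadratic relation
    set pz := minpoly F⟮i⟯ z with hpz
    have hpzmonic : pz.Monic := minpoly.monic hzint
    have hc2 : pz.coeff 2 = 1 := by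
      have := hpzmonic.coeff_natDegree
      rwa [hminz] at this
    have haeval : aeval z pz = 0 := minpoly.aeval _ _
    have hz2 : z ^ 2 + algebraMap F⟮i⟯ N (pz.coeff 1) * z + algebraMap F⟮i⟯ N (pz.coeff 0) = 0 := by
      have hsum := aeval_eq_sum_range (R := F⟮i⟯) (p := pz) z
      rw [hminz] at hsum
      rw [haeval] at hsum
      rw [Finset.sum_range_succ, Finset.sum_range_succ, Finset.sum_range_one] at hsum
      rw [hc2, one_smul] at hsum
      rw [Algebra.smul_def, Algebra.smul_def] at hsum
      linear_combination -hsum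
    set b := pz.coeff 1 with hb
    set c := pz.coeff 0 with hc
    set w : N := z + algebraMap F⟮i⟯ N (b / 2) with hw
    have hwM : w ∉ F⟮i⟯ := by
      intro hwmem
      apply hzM
      have : z = w - algebraMap F⟮i⟯ N (b / 2) := by rw [hw]; ring
      rw [this]
      exact sub_mem hwmem (show algebraMap F⟮i⟯ N (b/2) ∈ F⟮i⟯ from (b/2 : F⟮i⟯).2)
    haveI : CharZero N := charZero_of_injective_algebraMap (algebraMap F N).injective
    have hb2 : algebraMap F⟮i⟯ N (b / 2) * 2 = algebraMap F⟮i⟯ N b := by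
      rw [map_div₀, map_ofNat]
      exact div_mul_cancel₀ _ two_ne_zero
    have hw2 : w ^ 2 = algebraMap F⟮i⟯ N ((b / 2) ^ 2 - c) := by
      rw [hw, map_sub, map_pow]
      linear_combination hz2 + z * hb2
    obtain ⟨ζ, hζM, hζ⟩ := hkey (algebraMap F⟮i⟯ N ((b / 2) ^ 2 - c))
      (show algebraMap F⟮i⟯ N _ ∈ F⟮i⟯ from (((b / 2) ^ 2 - c : F⟮i⟯)).2)
    have hfac : (w - ζ) * (w + ζ) = 0 := by
      linear_combination hw2 - hζ
    rcases mul_eq_zero.mp hfac with hcase | hcase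
    · apply hwM
      rw [sub_eq_zero] at hcase
      rw [hcase]
      exact hζM
    · apply hwM
      have : w = -ζ := by linear_combination hcase
      rw [this]
      exact neg_mem hζM
  -- conclusion
  have hQsplit : Splits (Q.map (algebraMap F N)) :=
    (SplittingField.splits f).of_dvd (Polynomial.map_ne_zero hf0) (Polynomial.map_dvd _ (dvd_mul_left Q _))
  obtain ⟨r, hr⟩ := hQsplit.exists_eval_eq_zero
    (by rw [degree_map]; exact degree_ne_of_natDegree_ne hQ.natDegree_pos.ne')
  rw [eval_map] at hr
  have hrint : IsIntegral F r := IsIntegral.of_finite F r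
  have haevalr : aeval r Q = 0 := by rw [aeval_def]; exact hr
  have hminr : (minpoly F r).natDegree = Q.natDegree := by
    rw [← minpoly.eq_of_irreducible hQ haevalr]
    exact natDegree_mul_C (inv_ne_zero (leadingCoeff_ne_zero.mpr hQ0))
  have h3 : Q.natDegree = finrank F F⟮r⟯ := by rw [adjoin.finrank hrint, hminr]
  have h4 : finrank F F⟮r⟯ ∣ finrank F N :=
    ⟨finrank F⟮r⟯ N, (finrank_mul_finrank F F⟮r⟯ N).symm⟩
  have h5 : finrank F N ≤ 2 := by
    have ht := finrank_mul_finrank F F⟮i⟯ N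
    rw [hMN, mul_one] at ht
    rw [← ht, adjoin.finrank hiint]
    have hdv : minpoly F i ∣ X ^ 2 + C 1 := minpoly.dvd F i (by simpa using hi')
    have := natDegree_le_of_dvd hdv hX2.ne_zero
    rwa [natDegree_X_pow_add_C] at this
  rw [h3]
  exact (Nat.le_of_dvd Module.finrank_pos h4).trans h5



section Basics

variable {K : Type*} [Field K] [LinearOrder K] [IsStrictOrderedRing K] (V : Subring K)
variable {k : Type*} [Field k] (lam : V →+* k)

/-- convexity: |x| ≤ a ∈ V implies x ∈ V -/
private lemma mem_of_abs_le (hconv : ∀ a b : K, 0 ≤ b → b ≤ a → a ∈ V → b ∈ V)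
    {x a : K} (h : |x| ≤ a) (ha : a ∈ V) : x ∈ V := by
  have habs : |x| ∈ V := hconv a |x| (abs_nonneg x) h ha
  rcases le_total 0 x with hx | hx
  · rwa [abs_of_nonneg hx] at habs
  · rw [abs_of_nonpos hx] at habs
    simpa using V.neg_mem habs

private lemma isUnit_of_inv_mem {x : V} (hx : (x : K) ≠ 0) (hinv : (x : K)⁻¹ ∈ V) :
    IsUnit x := by
  refine isUnit_iff_exists.mpr ⟨⟨(x : K)⁻¹, hinv⟩, ?_, ?_⟩ <;>
    · ext
      simp [mul_inv_cancel₀ hx, inv_mul_cancel₀ hx]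

private lemma nonunit_abs_lt_one (hconv : ∀ a b : K, 0 ≤ b → b ≤ a → a ∈ V → b ∈ V)
    {x : V} (hx : ¬ IsUnit x) : |(x : K)| < 1 := by
  by_contra h
  push_neg at h
  have hx0 : (x : K) ≠ 0 := by
    intro h0
    rw [h0] at h
    simp at h
    linarith
  apply hx
  apply isUnit_of_inv_mem V hx0
  apply mem_of_abs_le V hconv (a := 1) _ V.one_mem
  rw [abs_inv]
  exact inv_le_one_of_one_le₀ h

private lemma sq_mem (hconv : ∀ a b : K, 0 ≤ b → b ≤ a → a ∈ V → b ∈ V)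
    {y : K} (h : y ^ 2 ∈ V) : y ∈ V := by
  rcases le_total (|y|) 1 with hy | hy
  · exact mem_of_abs_le V hconv hy V.one_mem
  · refine mem_of_abs_le V hconv (a := y ^ 2) ?_ h
    calc |y| = |y| * 1 := (mul_one _).symm
    _ ≤ |y| * |y| := by
      apply mul_le_mul_of_nonneg_left hy (abs_nonneg y)
    _ = y ^ 2 := by rw [← abs_mul, ← sq, abs_sq]

/-- -1 is not a square in the residue field -/
private lemma neg_one_not_sq (hconv : ∀ a b : K, 0 ≤ b → b ≤ a → a ∈ V → b ∈ V)
    (hsurj : Function.Surjective lam) (hker : ∀ x : V, lam x = 0 ↔ ¬ IsUnit x)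
    (u : k) : u ^ 2 ≠ -1 := by
  intro hu
  obtain ⟨w, rfl⟩ := hsurj u
  have h0 : lam (w ^ 2 + 1) = 0 := by
    rw [map_add, map_pow, map_one, hu]
    ring
  have hnu : ¬ IsUnit (w ^ 2 + 1) := (hker _).mp h0
  have hlt := nonunit_abs_lt_one V hconv hnu
  have hco : ((w ^ 2 + 1 : V) : K) = (w : K) ^ 2 + 1 := by push_cast; ring
  rw [hco] at hlt
  have h1 : (0:K) ≤ (w : K) ^ 2 := sq_nonneg _
  have : |(w : K) ^ 2 + 1| = (w:K)^2 + 1 := abs_of_pos (by linarith)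
  rw [this] at hlt
  linarith

/-- every element of k is ± a square -/
private lemma k_pm_sq (hK1 : ∀ x : K, 0 ≤ x → ∃ y : K, y ^ 2 = x)
    (hconv : ∀ a b : K, 0 ≤ b → b ≤ a → a ∈ V → b ∈ V)
    (hsurj : Function.Surjective lam) (a : k) :
    (∃ b : k, b ^ 2 = a) ∨ (∃ b : k, b ^ 2 = -a) := by
  obtain ⟨w, rfl⟩ := hsurj a
  rcases le_total 0 (w : K) with hw | hw
  · obtain ⟨y, hy⟩ := hK1 _ hw
    have hyV : y ∈ V := sq_mem V hconv (by rw [hy]; exact w.2)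
    left
    refine ⟨lam ⟨y, hyV⟩, ?_⟩
    rw [← map_pow]
    congr 1
    ext
    exact hy
  · obtain ⟨y, hy⟩ := hK1 (-(w:K)) (by linarith)
    have hyV : y ∈ V := sq_mem V hconv (by rw [hy]; exact V.neg_mem w.2)
    right
    refine ⟨lam ⟨y, hyV⟩, ?_⟩
    rw [← map_pow, ← map_neg]
    congr 1
    ext
    exact hy

/-- sums of two squares in k are squares -/
private lemma k_sumsq (hK1 : ∀ x : K, 0 ≤ x → ∃ y : K, y ^ 2 = x)
    (hconv : ∀ a b : K, 0 ≤ b → b ≤ a → a ∈ V → b ∈ V)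
    (hsurj : Function.Surjective lam) (a b : k) :
    ∃ d : k, d ^ 2 = a ^ 2 + b ^ 2 := by
  obtain ⟨w, rfl⟩ := hsurj a
  obtain ⟨v, rfl⟩ := hsurj b
  obtain ⟨y, hy⟩ := hK1 ((w:K)^2 + (v:K)^2) (by positivity)
  have hyV : y ∈ V := sq_mem V hconv (by
    rw [hy]
    exact V.add_mem (V.pow_mem w.2 2) (V.pow_mem v.2 2))
  refine ⟨lam ⟨y, hyV⟩, ?_⟩
  rw [← map_pow, ← map_pow, ← map_pow, ← map_add]
  congr 1
  ext
  push_cast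
  exact hy

private lemma nat_isUnit (hconv : ∀ a b : K, 0 ≤ b → b ≤ a → a ∈ V → b ∈ V)
    {n : ℕ} (hn : n ≠ 0) : IsUnit (n : V) := by
  have hco : ((n : V) : K) = (n : K) := by push_cast; rfl
  have hn0 : (0:K) < (n : K) := by exact_mod_cast Nat.pos_of_ne_zero hn
  apply isUnit_of_inv_mem V (by rw [hco]; exact hn0.ne')
  rw [hco]
  apply mem_of_abs_le V hconv (a := 1) _ V.one_mem
  rw [abs_of_pos (by positivity)]
  rw [inv_le_one_iff₀]
  right
  exact_mod_cast Nat.one_le_iff_ne_zero.mpr hn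

private lemma k_charZero (hconv : ∀ a b : K, 0 ≤ b → b ≤ a → a ∈ V → b ∈ V)
    (hker : ∀ x : V, lam x = 0 ↔ ¬ IsUnit x) : CharZero k := by
  apply charZero_of_inj_zero
  intro n hn
  by_contra hn0
  have : lam (n : V) = (n : k) := map_natCast lam n
  rw [hn] at this
  exact (hker _).mp this (nat_isUnit V hconv hn0)

/-- integrality: a root in K of a monic polynomial over V lies in V -/
private lemma root_mem (hval : ∀ x : K, x ≠ 0 → x ∈ V ∨ x⁻¹ ∈ V)
    (hker : ∀ x : V, lam x = 0 ↔ ¬ IsUnit x)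
    (P : Polynomial V) (hP : P.Monic) {ξ : K} (hξ : (P.map (V.subtype)).IsRoot ξ) :
    ξ ∈ V := by
  by_contra hout
  have hξ0 : ξ ≠ 0 := by rintro rfl; exact hout V.zero_mem
  have hinv : ξ⁻¹ ∈ V := (hval ξ hξ0).resolve_left hout
  set η : V := ⟨ξ⁻¹, hinv⟩ with hη
  have hηnu : ¬ IsUnit η := by
    intro hu
    obtain ⟨y, hy⟩ := isUnit_iff_exists.mp hu
    apply hout
    have : (η : K) * (y : K) = 1 := by exact_mod_cast congrArg (Subtype.val) hy.1
    have hyval : (y : K) = ξ := by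
      rw [← mul_right_inj' (inv_ne_zero hξ0), inv_mul_cancel₀ hξ0]
      exact this
    rw [← hyval]; exact y.2
  have hη0 : lam η = 0 := (hker _).mpr hηnu
  set n := P.natDegree with hn
  have hn0 : n ≠ 0 := by
    intro h0
    have : P = 1 := (Polynomial.Monic.natDegree_eq_zero hP).mp h0
    rw [this] at hξ
    simp [Polynomial.IsRoot] at hξ
  -- the sum in V
  set S : V := ∑ i ∈ Finset.range (n+1), P.coeff i * η ^ (n - i) with hS
  have hSK : (S : K) = 0 := by
    have hmapdeg : (P.map V.subtype).natDegree = n := hP.natDegree_map _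
    have heval : (P.map V.subtype).eval ξ = 0 := hξ
    rw [Polynomial.eval_eq_sum_range, hmapdeg] at heval
    have : (S : K) = (∑ i ∈ Finset.range (n+1), (P.map V.subtype).coeff i * ξ ^ i) * (ξ⁻¹) ^ n := by
      rw [hS]
      push_cast
      rw [Finset.sum_mul]
      apply Finset.sum_congr rfl
      intro i hi
      rw [Finset.mem_range] at hi
      have hile : i ≤ n := Nat.lt_succ_iff.mp hi
      rw [Polynomial.coeff_map]
      have hpow : ξ ^ i * (ξ⁻¹) ^ n = (ξ⁻¹) ^ (n - i) := by
        have h1 : (ξ⁻¹) ^ n = (ξ⁻¹) ^ i * (ξ⁻¹) ^ (n - i) := by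
          rw [← pow_add]
          congr 1
          omega
        rw [h1, ← mul_assoc, ← mul_pow, mul_inv_cancel₀ hξ0, one_pow, one_mul]
      rw [mul_assoc, hpow]
      rfl
    rw [this, heval, zero_mul]
  have hS0 : S = 0 := Subtype.ext hSK
  have hlamS : lam S = 1 := by
    rw [hS, map_sum]
    rw [Finset.sum_eq_single n]
    · rw [map_mul, map_pow]
      have hcn : P.coeff n = 1 := hP.coeff_natDegree
      rw [hcn, map_one, one_mul, Nat.sub_self, pow_zero]
    · intro i hi hin
      rw [Finset.mem_range] at hi
      rw [map_mul, map_pow, hη0, zero_pow (by omega), mul_zero]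
    · intro h; exact absurd (Finset.self_mem_range_succ n) h
  rw [hS0, map_zero] at hlamS
  exact zero_ne_one hlamS

end Basics

set_option maxHeartbeats 2000000 in
private lemma exists_extension {K : Type*} [Field K] [LinearOrder K] [IsStrictOrderedRing K]
    (hK : IsRealClosedOrdField K) (V : Subring K)
    (hval : ∀ x : K, x ≠ 0 → x ∈ V ∨ x⁻¹ ∈ V)
    (hconv : ∀ a b : K, 0 ≤ b → b ≤ a → a ∈ V → b ∈ V)
    {k : Type*} [Field k] (lam : V →+* k) (hsurj : Function.Surjective lam)
    (hker : ∀ x : V, lam x = 0 ↔ ¬ IsUnit x)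
    (k₀ : Subring V) (hk₀ : ∀ x ∈ k₀, x ≠ 0 → ∃ y ∈ k₀, x * y = 1)
    (c : k) (hc : ∀ x ∈ k₀, lam x ≠ c) :
    ∃ k₁ : Subring V, (∀ x ∈ k₁, x ≠ 0 → ∃ y ∈ k₁, x * y = 1) ∧ k₀ ≤ k₁ ∧ k₁ ≠ k₀ := by
  classical
  have hinvmem : ∀ z : K, z ∈ k₀.map V.subtype → z⁻¹ ∈ k₀.map V.subtype := by
    intro z hz
    rcases eq_or_ne z 0 with rfl | hz0
    · simpa using (k₀.map V.subtype).zero_mem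
    · obtain ⟨v, hv, hvz⟩ := Subring.mem_map.mp hz
      have hv0 : v ≠ 0 := by
        rintro rfl
        exact hz0 (by rw [← hvz]; rfl)
      obtain ⟨y, hy, hxy⟩ := hk₀ v hv hv0
      refine Subring.mem_map.mpr ⟨y, hy, ?_⟩
      have hmul : (v : K) * (y : K) = 1 := by exact_mod_cast congrArg Subtype.val hxy
      have : (v : K)⁻¹ = (y : K) := inv_eq_of_mul_eq_one_right hmul
      rw [← hvz]
      exact this.symm
  set E : Subfield K := { k₀.map V.subtype with inv_mem' := fun z hz => hinvmem z hz } with hE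
  have hEmem : ∀ z : K, z ∈ E ↔ ∃ v : V, v ∈ k₀ ∧ (v : K) = z := by
    intro z
    constructor
    · intro hz
      obtain ⟨v, hv, hvz⟩ := Subring.mem_map.mp hz
      exact ⟨v, hv, hvz⟩
    · rintro ⟨v, hv, rfl⟩
      exact Subring.mem_map.mpr ⟨v, hv, rfl⟩
  have hEV : ∀ z ∈ E, z ∈ V := by
    intro z hz
    obtain ⟨v, _, rfl⟩ := (hEmem z).mp hz
    exact v.2
  let toV : E →+* V :=
    { toFun := fun x => ⟨x.1, hEV x.1 x.2⟩
      map_one' := rfl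
      map_mul' := fun _ _ => rfl
      map_zero' := rfl
      map_add' := fun _ _ => rfl }
  let ν : E →+* k := lam.comp toV
  have hevalK : ∀ (s : Polynomial E) (w : V),
      ((Polynomial.eval w (s.map toV) : V) : K) = aeval (w : K) s := by
    intro s w
    rw [Polynomial.eval_map]
    rw [show ((Polynomial.eval₂ toV w s : V) : K) = _ from Polynomial.hom_eval₂ s toV V.subtype w]
    rw [aeval_def]
    rfl
  have hlameval : ∀ (s : Polynomial E) (w : V),
      lam (Polynomial.eval w (s.map toV)) = (s.map ν).eval (lam w) := by
    intro s w
    rw [Polynomial.eval_map, Polynomial.eval_map]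
    exact Polynomial.hom_eval₂ s toV lam w
  have hcE : ∀ x : E, ν x ≠ c := by
    intro x hx
    obtain ⟨v, hv, hvx⟩ := (hEmem x.1).mp x.2
    have hxv : toV x = v := Subtype.ext hvx.symm
    apply hc v hv
    rw [show ν x = lam (toV x) from rfl, hxv] at hx
    exact hx
  -- generic extension construction
  have mkext : ∀ ξ : K, ξ ∈ V → ξ ∉ E →
      (∀ z ∈ IntermediateField.adjoin E {ξ}, z ∈ V) →
      ∃ k₁ : Subring V, (∀ x ∈ k₁, x ≠ 0 → ∃ y ∈ k₁, x * y = 1) ∧ k₀ ≤ k₁ ∧ k₁ ≠ k₀ := by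
    intro ξ hξV hξE hsub
    refine ⟨(IntermediateField.adjoin E {ξ}).toSubfield.toSubring.comap V.subtype, ?_, ?_, ?_⟩
    · intro x hx hx0
      rw [Subring.mem_comap] at hx
      have hx0K : (x : K) ≠ 0 := fun h => hx0 (Subtype.ext h)
      have hinvA : (x : K)⁻¹ ∈ (IntermediateField.adjoin E {ξ}).toSubfield :=
        (IntermediateField.adjoin E {ξ}).toSubfield.inv_mem hx
      have hinvV : (x : K)⁻¹ ∈ V := hsub _ hinvA
      refine ⟨⟨(x : K)⁻¹, hinvV⟩, Subring.mem_comap.mpr hinvA, Subtype.ext ?_⟩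
      push_cast
      exact mul_inv_cancel₀ hx0K
    · intro v hv
      rw [Subring.mem_comap]
      have hvE : (v : K) ∈ E := (hEmem _).mpr ⟨v, hv, rfl⟩
      exact (IntermediateField.adjoin E {ξ}).algebraMap_mem ⟨(v : K), hvE⟩
    · intro heq
      have hmem : (⟨ξ, hξV⟩ : V) ∈
          (IntermediateField.adjoin E {ξ}).toSubfield.toSubring.comap V.subtype :=
        Subring.mem_comap.mpr (IntermediateField.mem_adjoin_simple_self E ξ)
      rw [heq] at hmem
      exact hξE ((hEmem ξ).mpr ⟨⟨ξ, hξV⟩, hmem, rfl⟩)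
  have adjsub : ∀ ξ : K, ξ ∈ V → IsIntegral E ξ →
      ∀ z ∈ IntermediateField.adjoin E {ξ}, z ∈ V := by
    intro ξ hξV hint z hz
    have hz' : z ∈ (IntermediateField.adjoin E {ξ}).toSubalgebra := hz
    rw [IntermediateField.adjoin_simple_toSubalgebra_of_isAlgebraic hint.isAlgebraic] at hz'
    refine Algebra.adjoin_induction ?_ ?_ ?_ ?_ hz'
    · intro x hx
      rw [Set.mem_singleton_iff] at hx
      subst hx
      exact hξV
    · intro e
      exact hEV e.1 e.2
    · intro x y _ _ hx hy
      exact V.add_mem hx hy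
    · intro x y _ _ hx hy
      exact V.mul_mem hx hy
  by_cases hT : ∀ s : Polynomial E, s ≠ 0 → (s.map ν).eval c ≠ 0
  · -- transcendental residue
    obtain ⟨w, hw⟩ := hsurj c
    have hξE : (w : K) ∉ E := by
      intro hmem
      apply hcE ⟨(w : K), hmem⟩
      rw [show ν ⟨(w : K), hmem⟩ = lam (toV ⟨(w : K), hmem⟩) from rfl,
        show toV ⟨(w : K), hmem⟩ = w from Subtype.ext rfl, hw]
    apply mkext (w : K) w.2 hξE
    intro z hz
    rw [IntermediateField.mem_adjoin_simple_iff] at hz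
    obtain ⟨r, s, hrs⟩ := hz
    rcases eq_or_ne s 0 with rfl | hs0
    · rw [map_zero, div_zero] at hrs
      rw [hrs]
      exact V.zero_mem
    · have hsunit : IsUnit (Polynomial.eval w (s.map toV)) := by
        by_contra hnu
        exact hT s hs0 (by rw [← hw, ← hlameval, (hker _).mpr hnu])
      obtain ⟨u, hu⟩ := isUnit_iff_exists.mp hsunit
      have huK : ((Polynomial.eval w (s.map toV) : V) : K) * (u : K) = 1 := by
        exact_mod_cast congrArg Subtype.val hu.1
      have hinv : (aeval ((w : K)) s)⁻¹ = (u : K) := by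
        rw [← hevalK]
        exact inv_eq_of_mul_eq_one_right huK
      rw [hrs, div_eq_mul_inv, hinv]
      refine V.mul_mem ?_ u.2
      rw [← hevalK]
      exact (Polynomial.eval w (r.map toV)).2
  · -- algebraic residue
    push_neg at hT
    obtain ⟨s₀, hs₀0, hs₀⟩ := hT
    haveI : CharZero k := k_charZero V lam hconv hker
    set F : Subfield k := ν.fieldRange with hF
    let νF : E →+* F := ν.rangeRestrictField
    have hνF : ∀ x : E, (νF x : k) = ν x := fun x => rfl
    have hνFsurj : Function.Surjective νF := by
      rintro ⟨y, hy⟩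
      obtain ⟨x, hx⟩ := RingHom.mem_fieldRange.mp hy
      exact ⟨x, Subtype.ext hx⟩
    have hcnotF : c ∉ F := by
      intro hcF
      obtain ⟨x, hx⟩ := RingHom.mem_fieldRange.mp hcF
      exact hcE x hx
    have hcomp : (algebraMap F k).comp νF = ν := rfl
    have hcint : IsIntegral F c := by
      apply IsAlgebraic.isIntegral
      refine ⟨s₀.map νF, Polynomial.map_ne_zero hs₀0, ?_⟩
      rw [aeval_def, ← Polynomial.eval_map, Polynomial.map_map, hcomp]
      exact hs₀
    have hPirr : Irreducible (minpoly F c) := minpoly.irreducible hcint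
    have hPdeg2 : 2 ≤ (minpoly F c).natDegree := by
      rcases Nat.lt_or_ge (minpoly F c).natDegree 2 with h | h
      · exfalso
        have hpos := minpoly.natDegree_pos hcint
        have h1 : (minpoly F c).natDegree = 1 := by omega
        have := minpoly.natDegree_eq_one_iff.mp h1
        obtain ⟨y, hy⟩ := this
        apply hcnotF
        rw [← hy]
        exact y.2
      · exact h
    by_cases hSQ2 : ∃ s : k, s ∉ F ∧ s * s ∈ F
    · -- a square root extension
      obtain ⟨s, hsF, hs2⟩ := hSQ2
      obtain ⟨aE, haE⟩ := RingHom.mem_fieldRange.mp hs2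
      have hs0 : s ≠ 0 := fun h => hsF (h ▸ F.zero_mem)
      have haEV : ((aE : K)) ∈ V := hEV _ aE.2
      have hFneg : ∀ t : k, t ∈ F → -t ∈ F := fun t ht => F.neg_mem ht
      rcases le_total 0 ((aE : K)) with hpos | hneg
      · obtain ⟨y, hy⟩ := hK.1 _ hpos
        have hyV : y ∈ V := sq_mem V hconv (by rw [hy]; exact haEV)
        have hyint : IsIntegral E y := by
          refine ⟨X ^ 2 - C aE, monic_X_pow_sub_C _ (by norm_num), ?_⟩
          simp only [eval₂_sub, eval₂_pow, eval₂_X, eval₂_C]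
          rw [show (algebraMap E K) aE = (aE : K) from rfl, hy]
          ring
        have hyE : y ∉ E := by
          intro hyE
          have ht2 : ν ⟨y, hyE⟩ * ν ⟨y, hyE⟩ = s * s := by
            rw [← haE, ← map_mul]
            congr 1
            refine Subtype.ext ?_
            show y * y = (aE : K)
            rw [← hy]; ring
          have hfac : (ν ⟨y, hyE⟩ - s) * (ν ⟨y, hyE⟩ + s) = 0 := by
            linear_combination ht2
          have hmemF : ν ⟨y, hyE⟩ ∈ F := RingHom.mem_fieldRange.mpr ⟨_, rfl⟩
          rcases mul_eq_zero.mp hfac with h | h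
          · apply hsF
            rw [show s = ν ⟨y, hyE⟩ from (sub_eq_zero.mp h).symm]
            exact hmemF
          · apply hsF
            rw [show s = -ν ⟨y, hyE⟩ by linear_combination h]
            exact F.neg_mem hmemF
        exact mkext y hyV hyE (adjsub y hyV hyint)
      · exfalso
        obtain ⟨y, hy⟩ := hK.1 (-(aE : K)) (by linarith)
        have hyV : y ∈ V := sq_mem V hconv (by rw [hy]; exact V.neg_mem haEV)
        have ht2 : lam ⟨y, hyV⟩ ^ 2 = -(s * s) := by
          rw [← haE, ← map_pow]
          rw [show ((⟨y, hyV⟩ : V) ^ 2) = -(toV aE) from Subtype.ext (by push_cast; rw [hy]; rfl)]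
          rw [map_neg]
          rfl
        apply neg_one_not_sq V lam hconv hsurj hker (lam ⟨y, hyV⟩ / s)
        rw [div_pow, ht2]
        field_simp
    · by_cases hODD : ∃ Q : Polynomial F, Q.Monic ∧ Irreducible Q ∧ Odd Q.natDegree ∧
          Q.natDegree ≠ 1
      · -- odd degree extension
        obtain ⟨Q, hQm, hQirr, hQodd, hQne1⟩ := hODD
        have hbij : Function.Bijective νF :=
          ⟨fun a b h => ν.injective (by rw [← hνF, h, hνF]), hνFsurj⟩
        let eF : E ≃+* F := RingEquiv.ofBijective νF hbij
        set q : Polynomial E := Q.map (eF.symm : F →+* E) with hq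
        have hqm : q.Monic := hQm.map _
        have hqdeg : q.natDegree = Q.natDegree := natDegree_map _
        set PV : Polynomial V := q.map toV with hPV
        have hPVm : PV.Monic := hqm.map _
        have hPK : PV.map V.subtype = q.map (algebraMap E K) := by
          rw [hPV, Polynomial.map_map]
          rfl
        have hPKdeg : (PV.map V.subtype).natDegree = Q.natDegree := by
          rw [hPK, natDegree_map, hqdeg]
        obtain ⟨ξ, hξroot⟩ := hK.2 (PV.map V.subtype) (by rw [hPKdeg]; exact hQodd)
        have hξV : ξ ∈ V := root_mem V lam hval hker PV hPVm hξroot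
        have hevalV0 : Polynomial.eval (⟨ξ, hξV⟩ : V) PV = 0 := by
          have h1 : (PV.map V.subtype).eval ξ = ((Polynomial.eval (⟨ξ, hξV⟩ : V) PV : V) : K) := by
            rw [Polynomial.eval_map]
            exact Polynomial.eval₂_at_apply V.subtype ⟨ξ, hξV⟩
          apply Subtype.ext
          rw [show ((0 : V) : K) = 0 from rfl, ← h1]
          exact hξroot
        have hmapF : PV.map lam = Q.map F.subtype := by
          rw [hPV, Polynomial.map_map, show lam.comp toV = ν from rfl, hq, Polynomial.map_map]
          congr 1
          ext x
          show ν ((eF.symm : F →+* E) x) = (x : k)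
          have := eF.apply_symm_apply x
          calc ν ((eF.symm : F →+* E) x) = ((νF ((eF.symm : F →+* E) x) : F) : k) := rfl
            _ = ((x : F) : k) := by rw [show νF ((eF.symm : F →+* E) x) = x from this]
        have hresroot : (Q.map F.subtype).eval (lam ⟨ξ, hξV⟩) = 0 := by
          have h2 : (PV.map lam).eval (lam ⟨ξ, hξV⟩) = lam (Polynomial.eval (⟨ξ, hξV⟩ : V) PV) := by
            rw [Polynomial.eval_map]
            exact Polynomial.eval₂_at_apply lam ⟨ξ, hξV⟩
          rw [← hmapF, h2, hevalV0, map_zero]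
        have hξE : ξ ∉ E := by
          intro hmem
          have hyc : ((νF ⟨ξ, hmem⟩ : F) : k) = lam ⟨ξ, hξV⟩ := by
            rw [hνF]
            rfl
          have hQroot : Q.eval (νF ⟨ξ, hmem⟩) = 0 := by
            have h3 : ((Q.eval (νF ⟨ξ, hmem⟩) : F) : k) = 0 := by
              rw [show ((Q.eval (νF ⟨ξ, hmem⟩) : F) : k)
                  = (Q.map F.subtype).eval ((νF ⟨ξ, hmem⟩ : F) : k) by
                rw [Polynomial.eval_map]
                exact (Polynomial.eval₂_at_apply F.subtype _).symm, hyc, hresroot]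
            exact_mod_cast h3
          have hdvd : X - C (νF ⟨ξ, hmem⟩) ∣ Q := dvd_iff_isRoot.mpr hQroot
          obtain ⟨u, hu⟩ := hdvd
          have hu0 : u ≠ 0 := by
            rintro rfl
            rw [mul_zero] at hu
            exact hQirr.ne_zero hu
          rcases hQirr.isUnit_or_isUnit hu with hunit | hunit
          · exact Polynomial.not_isUnit_X_sub_C _ hunit
          · apply hQne1
            rw [hu, natDegree_mul (X_sub_C_ne_zero _) hu0,
              natDegree_eq_zero_of_isUnit hunit, natDegree_X_sub_C, add_zero]
        have hξint : IsIntegral E ξ := by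
          refine ⟨q, hqm, ?_⟩
          rw [show Polynomial.eval₂ (algebraMap E K) ξ q = (q.map (algebraMap E K)).eval ξ from
            (Polynomial.eval_map _ _).symm, ← hPK]
          exact hξroot
        exact mkext ξ hξV hξE (adjsub ξ hξV hξint)
      · -- impossible by Artin-Schreier
        exfalso
        push_neg at hSQ2
        have hsq2' : ∀ s : k, s * s ∈ F → s ∈ F := by
          intro s hs
          by_contra hsF
          exact hSQ2 s hsF hs
        have sqF : ∀ a : F, (∃ b : F, b ^ 2 = a) ∨ (∃ b : F, b ^ 2 = -a) := by
          intro a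
          rcases k_pm_sq V lam hK.1 hconv hsurj (a : k) with ⟨t, ht⟩ | ⟨t, ht⟩
          · left
            have htF : t ∈ F := hsq2' t (by rw [← pow_two, ht]; exact a.2)
            exact ⟨⟨t, htF⟩, Subtype.ext (by push_cast; exact ht)⟩
          · right
            have htF : t ∈ F := hsq2' t (by rw [← pow_two, ht]; exact F.neg_mem a.2)
            exact ⟨⟨t, htF⟩, Subtype.ext (by push_cast; exact ht)⟩
        have sumsqF : ∀ a b : F, ∃ d : F, d ^ 2 = a ^ 2 + b ^ 2 := by
          intro a b
          obtain ⟨t, ht⟩ := k_sumsq V lam hK.1 hconv hsurj (a : k) (b : k)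
          have htF : t ∈ F := hsq2' t (by
            rw [← pow_two, ht]
            exact F.add_mem (F.pow_mem a.2 2) (F.pow_mem b.2 2))
          exact ⟨⟨t, htF⟩, Subtype.ext (by push_cast; exact ht)⟩
        have neg1F : ∀ b : F, b ^ 2 ≠ -1 := by
          intro b hb
          apply neg_one_not_sq V lam hconv hsurj hker (b : k)
          have : ((b : k)) ^ 2 = ((b ^ 2 : F) : k) := by push_cast; ring
          rw [this, hb]
          push_cast
          ring
        have oddoneF : ∀ Q : Polynomial F, Irreducible Q → Odd Q.natDegree →
            Q.natDegree = 1 := by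
          intro Q hQirr hQodd
          by_contra hne1
          apply hODD
          have hQ0 : Q ≠ 0 := hQirr.ne_zero
          have hlc : Q.leadingCoeff⁻¹ ≠ 0 := inv_ne_zero (leadingCoeff_ne_zero.mpr hQ0)
          refine ⟨Q * C Q.leadingCoeff⁻¹, monic_mul_leadingCoeff_inv hQ0, ?_, ?_, ?_⟩
          · have hun : IsUnit (C Q.leadingCoeff⁻¹ : Polynomial F) :=
              isUnit_C.mpr (isUnit_iff_ne_zero.mpr hlc)
            have hassoc : Associated Q (Q * C Q.leadingCoeff⁻¹) :=
              ⟨hun.unit, by rw [IsUnit.unit_spec]⟩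
            exact hassoc.irreducible hQirr
          · rwa [natDegree_mul_C hlc]
          · rwa [natDegree_mul_C hlc]
        have hbound := AS_bound sqF sumsqF neg1F oddoneF (minpoly F c) hPirr
        have hP2 : (minpoly F c).natDegree = 2 := le_antisymm hbound hPdeg2
        have hPm : (minpoly F c).Monic := minpoly.monic hcint
        have hc2' : (minpoly F c).coeff 2 = 1 := by
          have := hPm.coeff_natDegree
          rwa [hP2] at this
        have haev : aeval c (minpoly F c) = 0 := minpoly.aeval F c
        have hrel : c ^ 2 + ((minpoly F c).coeff 1 : k) * c + ((minpoly F c).coeff 0 : k) = 0 := by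
          have hsum := aeval_eq_sum_range (R := F) (p := minpoly F c) c
          rw [hP2, haev] at hsum
          rw [Finset.sum_range_succ, Finset.sum_range_succ, Finset.sum_range_one] at hsum
          rw [hc2', one_smul, Algebra.smul_def, Algebra.smul_def] at hsum
          rw [show (algebraMap F k) ((minpoly F c).coeff 0) = ((minpoly F c).coeff 0 : k) from rfl,
            show (algebraMap F k) ((minpoly F c).coeff 1) = ((minpoly F c).coeff 1 : k) from rfl]
            at hsum
          linear_combination -hsum
        set s := c + ((minpoly F c).coeff 1 : k) / 2 with hs
        have hsnotF : s ∉ F := by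
          intro hsmem
          apply hcnotF
          have h2F : ((2 : F) : k) = (2 : k) := map_ofNat F.subtype 2
          have hcs : c = s - (((minpoly F c).coeff 1 / 2 : F) : k) := by
            rw [hs]
            push_cast [h2F]
            ring
          rw [hcs]
          exact F.sub_mem hsmem (SetLike.coe_mem _)
        have hssF : s * s ∈ F := by
          have h2F : ((2 : F) : k) = (2 : k) := map_ofNat F.subtype 2
          have hss : s * s = ((((minpoly F c).coeff 1 / 2) ^ 2 - (minpoly F c).coeff 0 : F) : k) := by
            push_cast [h2F]
            rw [hs]
            linear_combination hrel
          rw [hss]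
          exact SetLike.coe_mem _
        exact hsnotF (hsq2' s hssF)
/-- Let `K` be a real closed field with convex valuation ring `V` and
surjective residue map `lam : V → k` with kernel the non-units. A subfield `k₀ ⊆ V`
maps isomorphically onto `k` under `lam` iff `k₀` is a maximal subfield of `V`; in
particular a coefficient field exists. -/
theorem coefficientField_iff_maximal_subfield {K : Type*} [Field K] [LinearOrder K] [IsStrictOrderedRing K]
    (hK : IsRealClosedOrdField K) (V : Subring K)
    (hval : ∀ x : K, x ≠ 0 → x ∈ V ∨ x⁻¹ ∈ V)
    (hconv : ∀ a b : K, 0 ≤ b → b ≤ a → a ∈ V → b ∈ V)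
    {k : Type*} [Field k] (lam : V →+* k) (hsurj : Function.Surjective lam)
    (hker : ∀ x : V, lam x = 0 ↔ ¬ IsUnit x) :
    (∀ k₀ : Subring V, (∀ x ∈ k₀, x ≠ 0 → ∃ y ∈ k₀, x * y = 1) →
      (Set.BijOn lam (k₀ : Set V) Set.univ ↔
        ∀ k₁ : Subring V, (∀ x ∈ k₁, x ≠ 0 → ∃ y ∈ k₁, x * y = 1) →
          k₀ ≤ k₁ → k₁ = k₀))
    ∧ ∃ k₀ : Subring V, (∀ x ∈ k₀, x ≠ 0 → ∃ y ∈ k₀, x * y = 1) ∧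
        Set.BijOn lam (k₀ : Set V) Set.univ := by
  classical
  have hinj : ∀ k₀ : Subring V, (∀ x ∈ k₀, x ≠ 0 → ∃ y ∈ k₀, x * y = 1) →
      Set.InjOn lam (k₀ : Set V) := by
    intro k₀ hk₀ x hx y hy hxy
    by_contra hne
    have hsub : x - y ∈ k₀ := k₀.sub_mem hx hy
    have hne0 : x - y ≠ 0 := sub_ne_zero.mpr hne
    obtain ⟨z, hz, hxz⟩ := hk₀ _ hsub hne0
    have h0 : lam (x - y) = 0 := by rw [map_sub, hxy, sub_self]
    exact (hker _).mp h0 (isUnit_iff_exists.mpr ⟨z, hxz, by rw [mul_comm]; exact hxz⟩)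
  have part1 : ∀ k₀ : Subring V, (∀ x ∈ k₀, x ≠ 0 → ∃ y ∈ k₀, x * y = 1) →
      (Set.BijOn lam (k₀ : Set V) Set.univ ↔
        ∀ k₁ : Subring V, (∀ x ∈ k₁, x ≠ 0 → ∃ y ∈ k₁, x * y = 1) → k₀ ≤ k₁ → k₁ = k₀) := by
    intro k₀ hk₀
    constructor
    · intro hbij k₁ hk₁ hle
      apply le_antisymm _ hle
      intro x hx
      obtain ⟨a, ha, hax⟩ := hbij.2.2 (Set.mem_univ (lam x))
      have hz : lam (x - a) = 0 := by rw [map_sub, hax, sub_self]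
      have hnu := (hker _).mp hz
      rcases eq_or_ne x a with rfl | hne
      · exact ha
      · exfalso
        have hxa : x - a ∈ k₁ := k₁.sub_mem hx (hle ha)
        have h0 : x - a ≠ 0 := sub_ne_zero.mpr hne
        obtain ⟨zz, hzz, hxz⟩ := hk₁ _ hxa h0
        exact hnu (isUnit_iff_exists.mpr ⟨zz, hxz, by rw [mul_comm]; exact hxz⟩)
    · intro hmax
      refine ⟨fun x _ => Set.mem_univ _, hinj k₀ hk₀, ?_⟩
      intro cc _
      by_contra hnc
      have hc : ∀ x ∈ k₀, lam x ≠ cc := by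
        intro x hx hlx
        exact hnc ⟨x, hx, hlx⟩
      obtain ⟨k₁, hk₁, hle, hne⟩ :=
        exists_extension hK V hval hconv lam hsurj hker k₀ hk₀ cc hc
      exact hne (hmax k₁ hk₁ hle)
  refine ⟨part1, ?_⟩
  have hratV : ∀ q : ℚ, (q : K) ∈ V := by
    intro q
    apply mem_of_abs_le V hconv (a := ((⌈|q|⌉₊ : ℕ) : K)) _ (natCast_mem V _)
    rw [← Rat.cast_abs]
    exact_mod_cast Nat.le_ceil |q|
  set B : Subring V := Subring.comap V.subtype (RingHom.range (Rat.castHom K)) with hB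
  have hBprop : ∀ x ∈ B, x ≠ 0 → ∃ y ∈ B, x * y = 1 := by
    intro x hx hx0
    rw [hB, Subring.mem_comap] at hx
    obtain ⟨q, hq⟩ := RingHom.mem_range.mp hx
    have hq0 : q ≠ 0 := by
      rintro rfl
      apply hx0
      apply Subtype.ext
      have : ((x : V) : K) = 0 := by simpa using hq.symm
      simpa using this
    refine ⟨⟨((q⁻¹ : ℚ) : K), hratV q⁻¹⟩,
      Subring.mem_comap.mpr (RingHom.mem_range.mpr ⟨q⁻¹, rfl⟩), ?_⟩
    apply Subtype.ext
    have hxq : ((x : V) : K) = (q : K) := by simpa using hq.symm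
    show ((x : V) : K) * ((q⁻¹ : ℚ) : K) = 1
    rw [hxq, ← Rat.cast_mul, mul_inv_cancel₀ hq0, Rat.cast_one]
  set S : Set (Subring V) := {k₀ | ∀ x ∈ k₀, x ≠ 0 → ∃ y ∈ k₀, x * y = 1} with hS
  have hzorn : ∀ c ⊆ S, IsChain (· ≤ ·) c → ∀ y ∈ c, ∃ ub ∈ S, ∀ z ∈ c, z ≤ ub := by
    intro ch hchS hchain y hy
    haveI : Nonempty ch := ⟨⟨y, hy⟩⟩
    have hdir : Directed (· ≤ ·) (fun i : ch => (i : Subring V)) := hchain.directed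
    refine ⟨⨆ i : ch, (i : Subring V), ?_,
      fun z hz => le_iSup (fun i : ch => (i : Subring V)) ⟨z, hz⟩⟩
    intro x hx hx0
    have hx' : x ∈ ⋃ i : ch, ((i : Subring V) : Set V) := by
      rw [← Subring.coe_iSup_of_directed hdir]
      exact hx
    obtain ⟨i, hxi⟩ := Set.mem_iUnion.mp hx'
    obtain ⟨y', hy', hxy⟩ := hchS i.2 x hxi hx0
    exact ⟨y', le_iSup (fun i : ch => (i : Subring V)) i hy', hxy⟩
  obtain ⟨m, -, hm⟩ := zorn_le_nonempty₀ S hzorn B hBprop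
  refine ⟨m, hm.prop, ?_⟩
  rw [part1 m hm.prop]
  intro k₁ hk₁ hle
  exact le_antisymm (hm.2 hk₁ hle) hle
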